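/- Let N ≥ 1 and let w₁A, w₁B ∈ ℂ^N be the per-polarization excitation vectors of a dual-polarized uniform linear protoarray. Define the companion weights w₂A = −J_N · conj(w₁B) and w₂B = J_N · conj(w₁A), and the expanded weights wA = (w₁A ; w₂A) ∈ ℂ^{2N}, wB = (w₁B ; w₂B) ∈ ℂ^{2N} by concatenation. Then for every electrical angle ψ ∈ ℝ, the total power pattern of the expanded array equals twice that of the protoarray: |wAᵀ a_{2N}(ψ)|² + |wBᵀ a_{2N}(ψ)|² = 2·(|w₁Aᵀ a_N(ψ)|² + |w₁Bᵀ a_N(ψ)|²). -/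

import Mathlib

open Finset

/-- Steering vector of an `N`-element uniform linear array at electrical angle `ψ`:
`(a_N(ψ))_n = exp(i n ψ)`. -/
noncomputable def steer (N : ℕ) (ψ : ℝ) : Fin N → ℂ :=
  fun n => Complex.exp (Complex.I * ((n : ℕ) : ℂ) * (ψ : ℂ))

/-- Bilinear dot product `wᵀ a = ∑ n, w n * a n`. -/
noncomputable def dotp {N : ℕ} (w a : Fin N → ℂ) : ℂ := ∑ n, w n * a n

lemma steer_natAdd_rev (N : ℕ) (hN : 1 ≤ N) (ψ : ℝ) (n : Fin N) :
    steer (N + N) ψ (Fin.natAdd N n.rev)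
      = Complex.exp (Complex.I * ((N + N - 1 : ℕ) : ℂ) * ψ)
        * (starRingEnd ℂ) (steer N ψ n) := by
  have hn : (n : ℕ) + 1 ≤ N := n.2
  have hval : ((Fin.natAdd N n.rev : Fin (N + N)) : ℕ) = N + N - 1 - (n : ℕ) := by
    simp [Fin.rev, Fin.natAdd]
    omega
  have hcast : (((Fin.natAdd N n.rev : Fin (N + N)) : ℕ) : ℂ)
      = ((N + N - 1 : ℕ) : ℂ) - ((n : ℕ) : ℂ) := by
    rw [hval]
    have : (n : ℕ) ≤ N + N - 1 := by omega
    push_cast [Nat.cast_sub this]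
    ring
  unfold steer
  rw [hcast, ← Complex.exp_conj]
  rw [← Complex.exp_add]
  congr 1
  simp [map_mul, Complex.conj_I, Complex.conj_natCast, Complex.conj_ofReal]
  ring

lemma rev_sum (N : ℕ) (hN : 1 ≤ N) (ψ : ℝ) (v : Fin N → ℂ) :
    ∑ n : Fin N, (starRingEnd ℂ) (v n.rev) * steer (N + N) ψ (Fin.natAdd N n)
      = Complex.exp (Complex.I * ((N + N - 1 : ℕ) : ℂ) * ψ)
        * (starRingEnd ℂ) (dotp v (steer N ψ)) := by
  rw [show (∑ n : Fin N, (starRingEnd ℂ) (v n.rev) * steer (N + N) ψ (Fin.natAdd N n))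
      = ∑ n : Fin N, (starRingEnd ℂ) (v n) * steer (N + N) ψ (Fin.natAdd N n.rev) from
    Fintype.sum_equiv Fin.revPerm _ _ (fun n => by simp)]
  rw [dotp, map_sum, Finset.mul_sum]
  refine Finset.sum_congr rfl fun n _ => ?_
  rw [steer_natAdd_rev N hN ψ n, map_mul]
  ring

lemma key_abs (z a b : ℂ) (hz : ‖z‖ = 1) :
    ‖a - z * (starRingEnd ℂ) b‖ ^ 2
      + ‖b + z * (starRingEnd ℂ) a‖ ^ 2
    = 2 * (‖a‖ ^ 2 + ‖b‖ ^ 2) := by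
  have hz' : z.re ^ 2 + z.im ^ 2 = 1 := by
    have := Complex.sq_norm z
    rw [hz] at this
    simp [Complex.normSq_apply] at this
    nlinarith [this]
  simp only [Complex.sq_norm, Complex.normSq_apply, Complex.sub_re, Complex.sub_im,
    Complex.add_re, Complex.add_im, Complex.mul_re, Complex.mul_im,
    Complex.conj_re, Complex.conj_im]
  nlinarith [hz', sq_nonneg (a.re + b.re), sq_nonneg (a.im + b.im)]

theorem asi_ula_expansion_preserves_pattern
    (N : ℕ) (hN : 1 ≤ N) (w1A w1B : Fin N → ℂ)
    (w2A w2B : Fin N → ℂ)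
    (h2A : w2A = fun n => -(starRingEnd ℂ) (w1B n.rev))
    (h2B : w2B = fun n => (starRingEnd ℂ) (w1A n.rev))
    (wA wB : Fin (N + N) → ℂ)
    (hA : wA = Fin.append w1A w2A)
    (hB : wB = Fin.append w1B w2B)
    (ψ : ℝ) :
    ‖dotp wA (steer (N + N) ψ)‖ ^ 2
      + ‖dotp wB (steer (N + N) ψ)‖ ^ 2
    = 2 * (‖dotp w1A (steer N ψ)‖ ^ 2
      + ‖dotp w1B (steer N ψ)‖ ^ 2) := by
  set z := Complex.exp (Complex.I * ((N + N - 1 : ℕ) : ℂ) * ψ) with hzdef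
  set α := dotp w1A (steer N ψ) with hα
  set β := dotp w1B (steer N ψ) with hβ
  have hzabs : ‖z‖ = 1 := by
    rw [hzdef, Complex.norm_exp]
    have : (Complex.I * ((N + N - 1 : ℕ) : ℂ) * ψ).re = 0 := by
      simp [Complex.mul_re, Complex.mul_im]
    rw [this, Real.exp_zero]
  have hdA : dotp wA (steer (N + N) ψ) = α - z * (starRingEnd ℂ) β := by
    rw [hA, dotp, Fin.sum_univ_add]
    have h1 : ∀ i : Fin N,
        Fin.append w1A w2A (Fin.castAdd N i) * steer (N + N) ψ (Fin.castAdd N i)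
          = w1A i * steer N ψ i := by
      intro i
      rw [Fin.append_left]
      congr 1
    have h2 : ∀ i : Fin N,
        Fin.append w1A w2A (Fin.natAdd N i) * steer (N + N) ψ (Fin.natAdd N i)
          = -((starRingEnd ℂ) (w1B i.rev) * steer (N + N) ψ (Fin.natAdd N i)) := by
      intro i
      rw [Fin.append_right, h2A]
      ring
    rw [Finset.sum_congr rfl (fun i _ => h1 i), Finset.sum_congr rfl (fun i _ => h2 i),
      Finset.sum_neg_distrib, rev_sum N hN ψ w1B]
    rw [← hzdef, ← hβ, hα]
    simp only [dotp]
    ring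
  have hdB : dotp wB (steer (N + N) ψ) = β + z * (starRingEnd ℂ) α := by
    rw [hB, dotp, Fin.sum_univ_add]
    have h1 : ∀ i : Fin N,
        Fin.append w1B w2B (Fin.castAdd N i) * steer (N + N) ψ (Fin.castAdd N i)
          = w1B i * steer N ψ i := by
      intro i
      rw [Fin.append_left]
      congr 1
    have h2 : ∀ i : Fin N,
        Fin.append w1B w2B (Fin.natAdd N i) * steer (N + N) ψ (Fin.natAdd N i)
          = (starRingEnd ℂ) (w1A i.rev) * steer (N + N) ψ (Fin.natAdd N i) := by
      intro i
      rw [Fin.append_right, h2B]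
    rw [Finset.sum_congr rfl (fun i _ => h1 i), Finset.sum_congr rfl (fun i _ => h2 i),
      rev_sum N hN ψ w1A]
    rw [← hzdef, ← hα, hβ]
    simp only [dotp]
  rw [hdA, hdB, key_abs z α β hzabs]
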